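/- Let (X,d) be a metric space and let r_1,…,r_M ∈ X be prototypes with dissimilarity embedding ζ(g) = (d(g,r_1),…,d(g,r_M)) ∈ ℝ^M. Then for any points g_1,…,g_n ∈ X and any g₀ ∈ X, writing y_t := ζ(g_t) and ȳ := (1/n)·Σ_{t=1}^n y_t, one has: ‖ȳ − ζ(g₀)‖₂² + (1/n)·Σ_{t=1}^n ‖y_t − ȳ‖₂² ≤ (M/n)·Σ_{t=1}^n d(g_t,g₀)². -/

import Mathlib

open MeasureTheory Finset

/-- The dissimilarity embedding `ζ(g) = (d(g,r_1),…,d(g,r_M)) ∈ ℝ^M`. -/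
noncomputable def dissEmbed {X : Type*} [MetricSpace X] {M : ℕ} (r : Fin M → X) (g : X) :
    EuclideanSpace ℝ (Fin M) :=
  (WithLp.equiv 2 (Fin M → ℝ)).symm fun i => dist g (r i)

open RealInnerProductSpace in
/-- deterministic sample analogue of Lemma 1:
`‖ȳ − ζ(g₀)‖₂² + (1/n)·Σ_t ‖y_t − ȳ‖₂² ≤ (M/n)·Σ_t d(g_t,g₀)²`. -/
theorem sample_embedding_mean_bound
    {X : Type*} [MetricSpace X] {M : ℕ} (r : Fin M → X)
    {n : ℕ} (hn : 0 < n) (g : Fin n → X) (g₀ : X)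
    (y : Fin n → EuclideanSpace ℝ (Fin M)) (hy : ∀ t, y t = dissEmbed r (g t))
    (ybar : EuclideanSpace ℝ (Fin M)) (hybar : ybar = (n : ℝ)⁻¹ • ∑ t, y t) :
    ‖ybar - dissEmbed r g₀‖ ^ 2 + (n : ℝ)⁻¹ * ∑ t, ‖y t - ybar‖ ^ 2
      ≤ (M : ℝ) / n * ∑ t, dist (g t) g₀ ^ 2 := by
  have hn' : (n : ℝ) ≠ 0 := Nat.cast_ne_zero.mpr hn.ne'
  set z := dissEmbed r g₀ with hz
  -- sum of deviations is zero
  have hsum0 : ∑ t, (y t - ybar) = 0 := by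
    rw [Finset.sum_sub_distrib, Finset.sum_const, Finset.card_univ, Fintype.card_fin,
      hybar, ← Nat.cast_smul_eq_nsmul ℝ, smul_smul]
    rw [mul_inv_cancel₀ hn', one_smul, sub_self]
  -- bias-variance decomposition
  have key : ∑ t, ‖y t - z‖ ^ 2 = ∑ t, ‖y t - ybar‖ ^ 2 + (n : ℝ) * ‖ybar - z‖ ^ 2 := by
    have expand : ∀ t, ‖y t - z‖ ^ 2
        = ‖y t - ybar‖ ^ 2 + 2 * ⟪y t - ybar, ybar - z⟫ + ‖ybar - z‖ ^ 2 := by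
      intro t
      have : y t - z = (y t - ybar) + (ybar - z) := by abel
      rw [this, norm_add_sq_real]
    simp only [expand, Finset.sum_add_distrib]
    have : ∑ t, 2 * ⟪y t - ybar, ybar - z⟫ = 0 := by
      rw [← Finset.mul_sum, ← sum_inner, hsum0, inner_zero_left, mul_zero]
    rw [this, Finset.sum_const, Finset.card_univ, Fintype.card_fin]
    push_cast
    ring
  -- per-term bound
  have per : ∀ t, ‖y t - z‖ ^ 2 ≤ (M : ℝ) * dist (g t) g₀ ^ 2 := by
    intro t
    rw [hy t, hz]
    rw [EuclideanSpace.norm_eq, Real.sq_sqrt (by positivity)]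
    have hle : ∀ i, ‖(dissEmbed r (g t) - dissEmbed r g₀) i‖ ^ 2 ≤ dist (g t) g₀ ^ 2 := by
      intro i
      have hcoord : (dissEmbed r (g t) - dissEmbed r g₀) i
          = dist (g t) (r i) - dist g₀ (r i) := rfl
      rw [hcoord, Real.norm_eq_abs, sq_abs]
      have h1 : |dist (g t) (r i) - dist g₀ (r i)| ≤ dist (g t) g₀ := abs_dist_sub_le _ _ _
      calc (dist (g t) (r i) - dist g₀ (r i)) ^ 2
          = |dist (g t) (r i) - dist g₀ (r i)| ^ 2 := (sq_abs _).symm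
        _ ≤ dist (g t) g₀ ^ 2 := by
            apply pow_le_pow_left₀ (abs_nonneg _) h1 2
    calc ∑ i, ‖(dissEmbed r (g t) - dissEmbed r g₀) i‖ ^ 2
        ≤ ∑ _i : Fin M, dist (g t) g₀ ^ 2 := Finset.sum_le_sum fun i _ => hle i
      _ = (M : ℝ) * dist (g t) g₀ ^ 2 := by
          rw [Finset.sum_const, Finset.card_univ, Fintype.card_fin, nsmul_eq_mul]
  have hsum : ∑ t, ‖y t - z‖ ^ 2 ≤ (M : ℝ) * ∑ t, dist (g t) g₀ ^ 2 := by
    rw [Finset.mul_sum]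
    exact Finset.sum_le_sum fun t _ => per t
  have goal_eq : ‖ybar - z‖ ^ 2 + (n : ℝ)⁻¹ * ∑ t, ‖y t - ybar‖ ^ 2
      = (n : ℝ)⁻¹ * ∑ t, ‖y t - z‖ ^ 2 := by
    rw [key]; field_simp; ring
  rw [goal_eq]
  have hre : (M : ℝ) / n * ∑ t, dist (g t) g₀ ^ 2
      = (n : ℝ)⁻¹ * ((M : ℝ) * ∑ t, dist (g t) g₀ ^ 2) := by ring
  rw [hre]
  exact mul_le_mul_of_nonneg_left hsum (by positivity)
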